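/- Let X ⊆ ℝ^m be a nonempty convex compact set and h : X → ℝ a K-strongly convex continuous function (K > 0). Define h*(y) = max_{x∈X}(⟨x,y⟩ − h(x)), Π(y) = argmax_{x∈X}(⟨x,y⟩ − h(x)) (unique by strong convexity), and the Fenchel coupling F(p,y) = h(p) + h*(y) − ⟨y,p⟩. Let Y^1 ∈ ℝ^m, let η^ℓ > 0 and R^ℓ ∈ ℝ^m for ℓ ≥ 1, and define Y^{ℓ+1} = Y^ℓ + η^ℓ R^ℓ and ρ^ℓ = Π(Y^ℓ). Then for every θ ∈ X and every k ≥ 1: Σ_{ℓ=1}^k η^ℓ ⟨R^ℓ, θ − ρ^ℓ⟩ ≤ F(θ, Y^1) + (1/(2K)) Σ_{ℓ=1}^k (η^ℓ)^2 ‖R^ℓ‖^2. -/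

import Mathlib

open scoped BigOperators RealInnerProductSpace
open Finset Filter Topology

noncomputable section

private lemma aux_inner_convexOn {m : ℕ} (X : Set (EuclideanSpace ℝ (Fin m)))
    (hX : Convex ℝ X) (v : EuclideanSpace ℝ (Fin m)) :
    ConvexOn ℝ X (fun x => ⟪x, v⟫) := by
  refine ⟨hX, fun x _ y _ a b _ _ _ => le_of_eq ?_⟩
  simp [inner_add_left, real_inner_smul_left, Finset.mul_sum, mul_assoc]

/-- quadratic growth from the minimizer of a strongly convex function -/
private lemma aux_min_gap {m : ℕ} (X : Set (EuclideanSpace ℝ (Fin m)))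
    (K : ℝ) (hK : 0 < K) (f : EuclideanSpace ℝ (Fin m) → ℝ)
    (hconv : ConvexOn ℝ X (fun x => f x - K / 2 * ‖x‖ ^ 2))
    (xs : EuclideanSpace ℝ (Fin m)) (hxs : xs ∈ X)
    (hmin : ∀ x ∈ X, f xs ≤ f x)
    (x : EuclideanSpace ℝ (Fin m)) (hx : x ∈ X) :
    f xs + K / 2 * ‖x - xs‖ ^ 2 ≤ f x := by
  have key : ∀ t : ℝ, 0 < t → t ≤ 1 →
      f xs + K / 2 * (1 - t) * ‖x - xs‖ ^ 2 ≤ f x := by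
    intro t ht ht1
    have hb : (0:ℝ) ≤ 1 - t := by linarith
    have hmem : t • x + (1 - t) • xs ∈ X :=
      hconv.1 hx hxs ht.le hb (by ring)
    have hc := hconv.2 hx hxs ht.le hb (by ring)
    have hnorm : ‖t • x + (1 - t) • xs‖ ^ 2
        = t * ‖x‖ ^ 2 + (1 - t) * ‖xs‖ ^ 2 - t * (1 - t) * ‖x - xs‖ ^ 2 := by
      have h1 : ‖t • x + (1 - t) • xs‖ ^ 2
          = ‖t • x‖ ^ 2 + 2 * ⟪t • x, (1 - t) • xs⟫ + ‖(1 - t) • xs‖ ^ 2 :=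
        norm_add_sq_real _ _
      have h2 : ‖x - xs‖ ^ 2 = ‖x‖ ^ 2 - 2 * ⟪x, xs⟫ + ‖xs‖ ^ 2 :=
        norm_sub_sq_real _ _
      have h3 : ‖t • x‖ ^ 2 = t ^ 2 * ‖x‖ ^ 2 := by
        rw [norm_smul]; simp [mul_pow, sq_abs]
      have h4 : ‖(1 - t) • xs‖ ^ 2 = (1 - t) ^ 2 * ‖xs‖ ^ 2 := by
        rw [norm_smul]; simp [mul_pow, sq_abs]
      have h5 : ⟪t • x, (1 - t) • xs⟫ = t * (1 - t) * ⟪x, xs⟫ := by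
        rw [real_inner_smul_left, real_inner_smul_right]; ring
      rw [h1, h3, h4, h5, h2]; ring
    simp only [smul_eq_mul] at hc
    rw [hnorm] at hc
    have hlow := hmin _ hmem
    have hmul : t * (f xs + K / 2 * (1 - t) * ‖x - xs‖ ^ 2) ≤ t * f x := by
      nlinarith [hc, hlow]
    exact le_of_mul_le_mul_left hmul ht
  -- take the limit t → 0⁺ along t = 1/(n+2)
  have hseq : Tendsto (fun n : ℕ => (1:ℝ) / (n + 2)) atTop (𝓝 0) := by
    have h0 := (tendsto_one_div_add_atTop_nhds_zero_nat (𝕜 := ℝ)).comp (tendsto_add_atTop_nat 1)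
    refine h0.congr fun n => ?_
    simp [Function.comp]
    push_cast
    ring
  have hlim : Tendsto (fun n : ℕ =>
      f xs + K / 2 * (1 - 1 / (n + 2)) * ‖x - xs‖ ^ 2) atTop
      (𝓝 (f xs + K / 2 * ‖x - xs‖ ^ 2)) := by
    have : Tendsto (fun n : ℕ => K / 2 * (1 - 1 / (n + 2)) * ‖x - xs‖ ^ 2) atTop
        (𝓝 (K / 2 * (1 - 0) * ‖x - xs‖ ^ 2)) :=
      (((tendsto_const_nhds.sub hseq).const_mul (K / 2)).mul_const _)
    simpa using tendsto_const_nhds.add this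
  refine le_of_tendsto hlim (Filter.Eventually.of_forall fun n => ?_)
  have h2 : (0:ℝ) < (n:ℝ) + 2 := by positivity
  refine key _ (by positivity) ?_
  rw [div_le_one h2]
  linarith [Nat.cast_nonneg (α := ℝ) n]

theorem dual_averaging_fenchel_bound
    {m : ℕ} (X : Set (EuclideanSpace ℝ (Fin m)))
    (hXne : X.Nonempty) (hXcvx : Convex ℝ X) (hXcpt : IsCompact X)
    (K : ℝ) (hK : 0 < K)
    (h : EuclideanSpace ℝ (Fin m) → ℝ)
    (hcont : ContinuousOn h X)
    -- K-strong convexity of h on X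
    (hstrong : ConvexOn ℝ X (fun x => h x - K / 2 * ‖x‖ ^ 2))
    -- Π(y) is the (unique) maximizer of ⟨x,y⟩ − h(x) over X
    (Proj : EuclideanSpace ℝ (Fin m) → EuclideanSpace ℝ (Fin m))
    (hProjmem : ∀ y, Proj y ∈ X)
    (hProjmax : ∀ y, ∀ x ∈ X, ⟪x, y⟫ - h x ≤ ⟪Proj y, y⟫ - h (Proj y))
    -- h*(y) = max_{x∈X} (⟨x,y⟩ − h(x))
    (hstar : EuclideanSpace ℝ (Fin m) → ℝ)
    (hhstar : ∀ y, hstar y = ⟪Proj y, y⟫ - h (Proj y))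
    -- Fenchel coupling
    (F : EuclideanSpace ℝ (Fin m) → EuclideanSpace ℝ (Fin m) → ℝ)
    (hF : ∀ p y, F p y = h p + hstar y - ⟪y, p⟫)
    -- step sizes, payoff vectors, dual scores and iterates
    (η : ℕ → ℝ) (hη : ∀ ℓ, 1 ≤ ℓ → 0 < η ℓ)
    (R : ℕ → EuclideanSpace ℝ (Fin m))
    (Y : ℕ → EuclideanSpace ℝ (Fin m))
    (hYrec : ∀ ℓ, 1 ≤ ℓ → Y (ℓ + 1) = Y ℓ + η ℓ • R ℓ)
    (ρ : ℕ → EuclideanSpace ℝ (Fin m))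
    (hρ : ∀ ℓ, 1 ≤ ℓ → ρ ℓ = Proj (Y ℓ)) :
    ∀ θ ∈ X, ∀ k, 1 ≤ k →
      ∑ ℓ ∈ Finset.Icc 1 k, η ℓ * ⟪R ℓ, θ - ρ ℓ⟫ ≤
        F θ (Y 1) + (1 / (2 * K)) * ∑ ℓ ∈ Finset.Icc 1 k, (η ℓ) ^ 2 * ‖R ℓ‖ ^ 2 := by
  intro θ hθ
  -- quadratic gap at the maximizer
  have gap : ∀ y, ∀ x ∈ X,
      (h (Proj y) - ⟪Proj y, y⟫) + K / 2 * ‖x - Proj y‖ ^ 2 ≤ h x - ⟪x, y⟫ := by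
    intro y x hx
    have hfun : (fun z => (h z - ⟪z, y⟫) - K / 2 * ‖z‖ ^ 2)
        = (fun z => (h z - K / 2 * ‖z‖ ^ 2) + ⟪z, -y⟫) := by
      funext z; simp [inner_neg_right]; ring
    have hfc : ConvexOn ℝ X (fun z => (h z - ⟪z, y⟫) - K / 2 * ‖z‖ ^ 2) := by
      rw [hfun]; exact hstrong.add (aux_inner_convexOn X hstrong.1 (-y))
    exact aux_min_gap X K hK (fun z => h z - ⟪z, y⟫) hfc (Proj y) (hProjmem y)
      (fun z hz => by linarith [hProjmax y z hz]) x hx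
  -- smoothness of hstar
  have smooth : ∀ y d, hstar (y + d) ≤ hstar y + ⟪d, Proj y⟫ + 1 / (2 * K) * ‖d‖ ^ 2 := by
    intro y d
    set p := Proj y
    set q := Proj (y + d)
    have hgap := gap y q (hProjmem (y + d))
    have hsplit : ⟪q, y + d⟫ = ⟪q, y⟫ + ⟪q, d⟫ := inner_add_right _ _ _
    have hq : ⟪q, d⟫ = ⟪p, d⟫ + ⟪q - p, d⟫ := by
      rw [inner_sub_left]; ring
    have hamgm : ⟪q - p, d⟫ ≤ K / 2 * ‖q - p‖ ^ 2 + 1 / (2 * K) * ‖d‖ ^ 2 := by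
      have h1 : ⟪q - p, d⟫ ≤ ‖q - p‖ * ‖d‖ := real_inner_le_norm _ _
      have h2 : ‖q - p‖ * ‖d‖ ≤ K / 2 * ‖q - p‖ ^ 2 + 1 / (2 * K) * ‖d‖ ^ 2 := by
        rw [← sub_nonneg]
        have heq : K / 2 * ‖q - p‖ ^ 2 + 1 / (2 * K) * ‖d‖ ^ 2 - ‖q - p‖ * ‖d‖
            = (K * ‖q - p‖ - ‖d‖) ^ 2 / (2 * K) := by
          field_simp
          ring
        rw [heq]
        positivity
      linarith
    have hsym : ⟪d, p⟫ = ⟪p, d⟫ := real_inner_comm _ _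
    rw [hhstar (y + d), hhstar y]
    have : ⟪q, y + d⟫ - h q = (⟪q, y⟫ - h q) + ⟪q, d⟫ := by rw [hsplit]; ring
    nlinarith [hgap]
  -- F is nonnegative
  have Fnn : ∀ y, 0 ≤ F θ y := by
    intro y
    have h1 := hProjmax y θ hθ
    have h2 : ⟪y, θ⟫ = ⟪θ, y⟫ := real_inner_comm _ _
    rw [hF, hhstar]
    linarith
  -- per-step inequality
  have step : ∀ ℓ, 1 ≤ ℓ →
      η ℓ * ⟪R ℓ, θ - ρ ℓ⟫ ≤
        F θ (Y ℓ) - F θ (Y (ℓ + 1)) + 1 / (2 * K) * ((η ℓ) ^ 2 * ‖R ℓ‖ ^ 2) := by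
    intro ℓ hℓ
    have hrec := hYrec ℓ hℓ
    have hsm := smooth (Y ℓ) (η ℓ • R ℓ)
    have hnrm : ‖η ℓ • R ℓ‖ ^ 2 = (η ℓ) ^ 2 * ‖R ℓ‖ ^ 2 := by
      rw [norm_smul]; simp [mul_pow, sq_abs]
    have hin1 : ⟪η ℓ • R ℓ, Proj (Y ℓ)⟫ = η ℓ * ⟪R ℓ, ρ ℓ⟫ := by
      rw [hρ ℓ hℓ, real_inner_smul_left]
    have hin2 : ⟪Y ℓ + η ℓ • R ℓ, θ⟫ = ⟪Y ℓ, θ⟫ + η ℓ * ⟪R ℓ, θ⟫ := by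
      rw [inner_add_left, real_inner_smul_left]
    have hin3 : ⟪R ℓ, θ - ρ ℓ⟫ = ⟪R ℓ, θ⟫ - ⟪R ℓ, ρ ℓ⟫ := inner_sub_right _ _ _
    rw [hF, hF, hrec, hin2, hin3]
    rw [hnrm, hin1] at hsm
    nlinarith [hsm]
  -- telescoping by induction
  have strong : ∀ k, 1 ≤ k →
      ∑ ℓ ∈ Finset.Icc 1 k, η ℓ * ⟪R ℓ, θ - ρ ℓ⟫ ≤
        F θ (Y 1) - F θ (Y (k + 1)) +
          (1 / (2 * K)) * ∑ ℓ ∈ Finset.Icc 1 k, (η ℓ) ^ 2 * ‖R ℓ‖ ^ 2 := by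
    intro k hk
    induction k, hk using Nat.le_induction with
    | base =>
      simp only [Finset.Icc_self, Finset.sum_singleton]
      linarith [step 1 le_rfl]
    | succ k hk ih =>
      rw [Finset.sum_Icc_succ_top (by omega : 1 ≤ k + 1),
          Finset.sum_Icc_succ_top (by omega : 1 ≤ k + 1)]
      have hs := step (k + 1) (by omega)
      linarith [ih]
  intro k hk
  linarith [strong k hk, Fnn (Y (k + 1))]
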